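/- Let L be a Lie algebra and I a finite-dimensional ideal of L. Then Δ(L/I) = (Δ(L) + I)/I. -/

import Mathlib

/-- The adjoint image `[L, x]` of an element of a Lie algebra, as a subspace. -/
def adIm (K L : Type*) [Field K] [LieRing L] [LieAlgebra K L] (x : L) :
    Submodule K L :=
  Submodule.span K {y : L | ∃ z : L, y = ⁅z, x⁆}

/-- The delta-set `Δ_n(L) = {x ∈ L : dim [L,x] ≤ n}`. -/
def deltaSet (K L : Type*) [Field K] [LieRing L] [LieAlgebra K L] (n : ℕ) :
    Set L :=
  {x : L | Module.rank K ↥(adIm K L x) ≤ n}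

/-- The set `Δ(L) = {x ∈ L : dim [L,x] < ∞}` of elements of finite width. -/
def Delta (K L : Type*) [Field K] [LieRing L] [LieAlgebra K L] : Set L :=
  {x : L | Module.Finite K ↥(adIm K L x)}

lemma adIm_map {K L : Type*} [Field K] [LieRing L] [LieAlgebra K L]
    (I : LieIdeal K L) (x : L) :
    (adIm K L x).map I.toSubmodule.mkQ
      = adIm K (L ⧸ I) (LieSubmodule.Quotient.mk (N := I) x) := by
  rw [adIm, adIm, Submodule.map_span]
  congr 1
  ext y
  constructor
  · rintro ⟨_, ⟨z, rfl⟩, rfl⟩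
    exact ⟨LieSubmodule.Quotient.mk (N := I) z, rfl⟩
  · rintro ⟨z, rfl⟩
    obtain ⟨w, rfl⟩ := Submodule.Quotient.mk_surjective I.toSubmodule z
    exact ⟨⁅w, x⁆, ⟨w, rfl⟩, rfl⟩

/-- if `I` is a finite-dimensional ideal of `L`, then
`Δ(L/I) = (Δ(L) + I)/I`. -/
theorem Delta_quotient {K L : Type*} [Field K] [LieRing L] [LieAlgebra K L]
    (I : LieIdeal K L) (hI : Module.Finite K I) :
    Delta K (L ⧸ I) =
      LieSubmodule.Quotient.mk (N := I) ''
        {w : L | ∃ d ∈ Delta K L, ∃ i ∈ I, w = d + i} := by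
  ext xq
  obtain ⟨x, rfl⟩ := LieSubmodule.Quotient.surjective_mk' (N := I) xq
  rw [LieSubmodule.Quotient.mk'_apply]
  constructor
  · intro hx
    refine ⟨x, ⟨x, ?_, 0, I.zero_mem, (add_zero x).symm⟩, rfl⟩
    -- `x ∈ Delta K L`, i.e. `adIm K L x` is finite dimensional.
    have hx' : Module.Finite K ↥(adIm K (L ⧸ I) (LieSubmodule.Quotient.mk (N := I) x)) := hx
    rw [← adIm_map I x] at hx'
    -- rank-nullity argument
    set S := adIm K L x
    set g : S →ₗ[K] (L ⧸ I) := I.toSubmodule.mkQ ∘ₗ S.subtype with hg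
    have hrange : LinearMap.range g = S.map I.toSubmodule.mkQ := by
      rw [hg, LinearMap.range_comp, Submodule.range_subtype]
    have hker : Module.rank K ↥(LinearMap.ker g) ≤ Module.rank K I := by
      refine LinearMap.rank_le_of_injective
        (⟨⟨fun k => ⟨(k : S), by
            have hk : Submodule.Quotient.mk (p := I.toSubmodule) ↑(↑k : S) = 0 := k.2
            exact (Submodule.Quotient.mk_eq_zero _).1 hk⟩,
          fun a b => rfl⟩, fun c a => rfl⟩ : ↥(LinearMap.ker g) →ₗ[K] I) ?_
      intro a b hab
      have h2 : ((a : S) : L) = ((b : S) : L) := congrArg (fun t : I => (t : L)) hab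
      exact Subtype.ext (Subtype.ext h2)
    have h1 : Module.rank K ↥(LinearMap.range g) < Cardinal.aleph0 := by
      rw [hrange]
      exact Module.rank_lt_aleph0 K _
    have h2 : Module.rank K ↥(LinearMap.ker g) < Cardinal.aleph0 :=
      lt_of_le_of_lt hker (Module.rank_lt_aleph0 K I)
    have := LinearMap.rank_range_add_rank_ker g
    show Module.Finite K S
    rw [← Module.rank_lt_aleph0_iff, ← this]
    exact Cardinal.add_lt_aleph0 h1 h2
  · rintro ⟨w, ⟨d, hd, i, hi, rfl⟩, hw⟩
    have hmk : LieSubmodule.Quotient.mk (N := I) x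
        = LieSubmodule.Quotient.mk (N := I) d := by
      rw [← hw]
      show LieSubmodule.Quotient.mk' I (d + i) = LieSubmodule.Quotient.mk' I d
      rw [map_add, (LieSubmodule.Quotient.mk_eq_zero I).2 hi, add_zero]
    show Module.Finite K ↥(adIm K (L ⧸ I) (LieSubmodule.Quotient.mk (N := I) x))
    rw [hmk, ← adIm_map I d]
    have : Module.Finite K ↥(adIm K L d) := hd
    exact Module.Finite.map _ _
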